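/- Product update with the action model E2 computes the non-inflating update rule with conservative tie-breaking: for any threshold model M = (A, N, B, θ), M ⊗ E2 is isomorphic to (A, N, B⁺, θ) where B⁺ = {a : |N(a)∩B|/|N(a)| > θ} ∪ {a : |N(a)∩B|/|N(a)| = θ and a ∈ B}. -/
import Mathlib


open Finset
open scoped Classical

variable {α : Type*}

noncomputable def nbhd [Fintype α] (N : α → α → Prop) (a : α) : Finset α :=
  Finset.univ.filter (fun b => N a b)

noncomputable def frac [Fintype α] (N : α → α → Prop) (B : Finset α) (a : α) : ℝ :=
  ((nbhd N a ∩ B).card : ℝ) / ((nbhd N a).card : ℝ)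

/-- Postconditions of action-model states: `B`, `¬B`, or `⊤` (no change). -/
inductive Post where
  | B : Post
  | notB : Post
  | top : Post
deriving DecidableEq

/-- An action model over agents `α` with states `S`: a relation, and for each
state a precondition (given by its extension, a set of agents) and a
postcondition. -/
structure ActionModel (α : Type*) (S : Type*) where
  R : S → S → Prop
  pre : S → Finset α
  post : S → Post

/-- Membership of a product-update pair `(a,σ)` in the updated behavior set
`B↑`. -/
def BUp (E : ActionModel α S) (B : Finset α) (a : α) (σ : S) : Prop :=
  (a ∈ B ∧ E.post σ ≠ Post.notB) ∨ E.post σ = Post.B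

noncomputable def noninfl [Fintype α] (N : α → α → Prop) (θ : ℝ) (B : Finset α) : Finset α :=
  Finset.univ.filter (fun a => θ < frac N B a) ∪
    Finset.univ.filter (fun a => frac N B a = θ ∧ a ∈ B)

/-- The action model `E2`: state `0` = (`⟨<⟩B`, post `B`), state `1` =
(`(=)B`, post `⊤`), state `2` = (`[>]¬B`, post `¬B`); full relation. -/
noncomputable def E2 [Fintype α] (N : α → α → Prop) (θ : ℝ) (B : Finset α) :
    ActionModel α (Fin 3) where
  R := fun _ _ => True
  pre := fun σ =>
    if σ = 0 then Finset.univ.filter (fun a => θ < frac N B a)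
    else if σ = 1 then Finset.univ.filter (fun a => frac N B a = θ)
    else Finset.univ.filter (fun a => frac N B a < θ)
  post := fun σ => if σ = 0 then Post.B else if σ = 1 then Post.top else Post.notB

/-- product update with `E2` computes the non-inflating update
rule with conservative tie-breaking: `M ⊗ E2` is isomorphic to
`(A, N, B⁺, θ)` with `B⁺ = noninfl N θ B`. -/
theorem E2_computes_noninflating [Fintype α] (N : α → α → Prop)
    (hirr : ∀ a, ¬ N a a) (hsym : ∀ a b, N a b → N b a)
    (θ : ℝ) (hθ0 : 0 ≤ θ) (hθ1 : θ ≤ 1) (B : Finset α)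
    (hnb : ∀ a, (nbhd N a).Nonempty) :
    ∃ f : α → {p : α × Fin 3 // p.1 ∈ (E2 N θ B).pre p.2},
      Function.Bijective f ∧ (∀ a, (f a).1.1 = a) ∧
      (∀ a b, N a b ↔
        (N (f a).1.1 (f b).1.1 ∧ (E2 N θ B).R (f a).1.2 (f b).1.2)) ∧
      (∀ a, a ∈ noninfl N θ B ↔ BUp (E2 N θ B) B (f a).1.1 (f a).1.2) := by
  classical
  set g : α → Fin 3 := fun a => if θ < frac N B a then 0 else if frac N B a = θ then 1 else 2
    with hg
  have hpre : ∀ a, a ∈ (E2 N θ B).pre (g a) := by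
    intro a
    by_cases h1 : θ < frac N B a
    · simp [E2, g, h1]
    · by_cases h2 : frac N B a = θ
      · simp [E2, g, h1, h2]
      · have h3 : frac N B a < θ := lt_of_le_of_ne (not_lt.mp h1) h2
        simp [E2, g, h1, h2, h3]
  refine ⟨fun a => ⟨(a, g a), hpre a⟩, ⟨?_, ?_⟩, fun a => rfl, ?_, ?_⟩
  · intro a b hab
    exact congrArg (fun p => p.1.1) hab
  · rintro ⟨⟨a, σ⟩, h⟩
    refine ⟨a, ?_⟩
    have hσ : g a = σ := by
      by_cases h1 : θ < frac N B a
      · fin_cases σ <;> simp_all [E2, g] <;> linarith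
      · by_cases h2 : frac N B a = θ
        · fin_cases σ <;> simp_all [E2, g] <;> linarith
        · have h3 : frac N B a < θ := lt_of_le_of_ne (not_lt.mp h1) h2
          fin_cases σ <;> simp_all [E2, g] <;> linarith
    simp [hσ]
  · intro a b
    simp [E2]
  · intro a
    by_cases h1 : θ < frac N B a
    · simp [noninfl, BUp, E2, g, h1]
    · by_cases h2 : frac N B a = θ
      · simp [noninfl, BUp, E2, g, h1, h2]
      · have h3 : frac N B a < θ := lt_of_le_of_ne (not_lt.mp h1) h2
        constructor
        · intro h
          simp [noninfl] at h
          rcases h with h | h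
          · exact absurd h h1
          · exact absurd h.1 h2
        · intro h
          simp [BUp, E2, g, h1, h2] at h
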